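/- Let n ≥ 2, let f_1, ..., f_n : ℝ → ℝ be continuous and bounded, let K_1, ..., K_n be probability density functions on [0,∞), and let μ : ℝ → ℝ be continuous with μ(y) ≥ μ₀ for all y, for some μ₀ > 0. Suppose x_1, ..., x_n : ℝ → ℝ are bounded differentiable functions satisfying, for every t ∈ ℝ and every i ∈ {1, ..., n} (with the convention x_0 := x_n), x_i'(t) = f_i(∫_0^∞ x_{i-1}(t - φ) K_i(φ) dφ) - μ(x_n(t)) · x_i(t). Then for every i ∈ {1, ..., n} and every t ∈ ℝ, x_i(t) = ∫_0^∞ f_i(∫_0^∞ x_{i-1}(t - s - φ) K_i(φ) dφ) · exp(-∫_{t-s}^t μ(x_n(u)) du) ds. -/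

import Mathlib

open MeasureTheory

/-- Lemma 2.1: each compartment of the cyclic distributed-delay system is given
by the variation-of-constants integral representation over its infinite
history.  Compartments are indexed `1, …, n` with the convention `x 0 = x n`. -/
theorem stmt2
    (n : ℕ) (hn : 2 ≤ n)
    (f K : ℕ → ℝ → ℝ) (μ : ℝ → ℝ) (μ₀ : ℝ)
    (hfcont : ∀ i, 1 ≤ i → i ≤ n → Continuous (f i))
    (hfbdd : ∀ i, 1 ≤ i → i ≤ n → ∃ C, ∀ y, |f i y| ≤ C)
    (hKmeas : ∀ i, 1 ≤ i → i ≤ n → Measurable (K i))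
    (hKnonneg : ∀ i, 1 ≤ i → i ≤ n → ∀ φ : ℝ, 0 ≤ φ → 0 ≤ K i φ)
    (hKint : ∀ i, 1 ≤ i → i ≤ n → ∫ φ in Set.Ioi (0 : ℝ), K i φ = 1)
    (hμcont : Continuous μ) (hμ₀ : 0 < μ₀) (hμlb : ∀ y, μ₀ ≤ μ y)
    (x : ℕ → ℝ → ℝ)
    (hxbdd : ∀ i, 1 ≤ i → i ≤ n → ∃ C, ∀ t, |x i t| ≤ C)
    (hx0 : x 0 = x n)
    (hode : ∀ i, 1 ≤ i → i ≤ n → ∀ t : ℝ,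
      HasDerivAt (x i)
        (f i (∫ φ in Set.Ioi (0 : ℝ), x (i - 1) (t - φ) * K i φ)
          - μ (x n t) * x i t) t) :
    ∀ i, 1 ≤ i → i ≤ n → ∀ t : ℝ,
      x i t = ∫ s in Set.Ioi (0 : ℝ),
        f i (∫ φ in Set.Ioi (0 : ℝ), x (i - 1) (t - s - φ) * K i φ)
          * Real.exp (-∫ u in (t - s)..t, μ (x n u)) := by
  intro i hi1 hin t
  have hn1 : 1 ≤ n := le_trans one_le_two hn
  have hxc : ∀ j, 1 ≤ j → j ≤ n → Continuous (x j) :=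
    fun j h1 h2 => continuous_iff_continuousAt.2 fun s => (hode j h1 h2 s).continuousAt
  have hxnc : Continuous (x n) := hxc n hn1 le_rfl
  have hprevc : Continuous (x (i - 1)) := by
    rcases Nat.lt_or_ge 1 i with h | h
    · exact hxc _ (by omega) (by omega)
    · have : i = 1 := le_antisymm h hi1
      rw [this]; simpa [hx0] using hxnc
  obtain ⟨Cx, hCx⟩ := hxbdd i hi1 hin
  obtain ⟨Cp, hCp⟩ : ∃ C, ∀ s, |x (i - 1) s| ≤ C := by
    rcases Nat.lt_or_ge 1 i with h | h
    · exact hxbdd _ (by omega) (by omega)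
    · have : i = 1 := le_antisymm h hi1
      rw [this]; simpa [hx0] using hxbdd n hn1 le_rfl
  obtain ⟨Cf, hCf⟩ := hfbdd i hi1 hin
  have hCf0 : 0 ≤ Cf := le_trans (abs_nonneg _) (hCf 0)
  -- K i is integrable on Ioi 0
  have hKintg : IntegrableOn (K i) (Set.Ioi (0 : ℝ)) := by
    by_contra h
    have h0 : ∫ φ in Set.Ioi (0 : ℝ), K i φ = 0 := integral_undef h
    rw [hKint i hi1 hin] at h0
    norm_num at h0
  -- μ ∘ x n is continuous
  have hμc : Continuous fun u => μ (x n u) := hμcont.comp hxnc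
  -- the exponent and the exponential
  set I : ℝ → ℝ := fun s => ∫ u in (t - s)..t, μ (x n u) with hI_def
  set E : ℝ → ℝ := fun s => Real.exp (-(I s)) with hE_def
  have hIder : ∀ s : ℝ, HasDerivAt I (μ (x n (t - s))) s := by
    intro s
    have hlin : HasDerivAt (fun s : ℝ => t - s) (-1) s := by
      simpa using (hasDerivAt_id s).const_sub t
    have hJ : HasDerivAt (fun b => ∫ u in t..b, μ (x n u)) (μ (x n (t - s))) (t - s) :=
      (hμc.integral_hasStrictDerivAt t (t - s)).hasDerivAt
    have h2 : HasDerivAt (fun s : ℝ => ∫ u in t..(t - s), μ (x n u))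
        (μ (x n (t - s)) * (-1)) s := hJ.comp s hlin
    have h3 : HasDerivAt (fun s : ℝ => -∫ u in t..(t - s), μ (x n u))
        (-(μ (x n (t - s)) * (-1))) s := h2.neg
    have heq : I = fun s : ℝ => -∫ u in t..(t - s), μ (x n u) := by
      funext s
      rw [hI_def]
      exact intervalIntegral.integral_symm t (t - s)
    rw [heq]
    convert h3 using 1
    ring
  have hIc : Continuous I := continuous_iff_continuousAt.2 fun s => (hIder s).continuousAt
  have hEc : Continuous E := Real.continuous_exp.comp hIc.neg
  have hEder : ∀ s : ℝ, HasDerivAt E (Real.exp (-(I s)) * -(μ (x n (t - s)))) s :=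
    fun s => (hIder s).neg.exp
  -- the forcing term
  set g : ℝ → ℝ := fun s => f i (∫ φ in Set.Ioi (0 : ℝ), x (i - 1) (t - s - φ) * K i φ)
    with hg_def
  have hinner : Continuous fun s : ℝ => ∫ φ in Set.Ioi (0 : ℝ), x (i - 1) (t - s - φ) * K i φ := by
    apply continuous_of_dominated (bound := fun φ => Cp * K i φ)
    · intro s
      exact ((hprevc.comp (by continuity : Continuous fun φ : ℝ => t - s - φ)).aestronglyMeasurable.mul
        (hKmeas i hi1 hin).aestronglyMeasurable).restrict
    · intro s
      filter_upwards [ae_restrict_mem measurableSet_Ioi] with φ hφ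
      have hK0 : 0 ≤ K i φ := hKnonneg i hi1 hin φ (le_of_lt hφ)
      rw [Real.norm_eq_abs, abs_mul, abs_of_nonneg hK0]
      exact mul_le_mul_of_nonneg_right (hCp _) hK0
    · exact hKintg.const_mul Cp
    · filter_upwards with φ
      exact (hprevc.comp (by continuity)).mul continuous_const
  have hgc : Continuous g := (hfcont i hi1 hin).comp hinner
  -- variation of constants on [0, S]
  have hFder : ∀ s : ℝ, HasDerivAt (fun s => x i (t - s) * E s) (-(g s * E s)) s := by
    intro s
    have hlin : HasDerivAt (fun s : ℝ => t - s) (-1) s := by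
      simpa using (hasDerivAt_id s).const_sub t
    have hx' : HasDerivAt (fun s : ℝ => x i (t - s))
        ((f i (∫ φ in Set.Ioi (0 : ℝ), x (i - 1) (t - s - φ) * K i φ)
          - μ (x n (t - s)) * x i (t - s)) * (-1)) s := by
      have := (hode i hi1 hin (t - s)).comp s hlin
      exact this
    have hmul : HasDerivAt (fun s => x i (t - s) * E s) _ s := hx'.mul (hEder s)
    convert hmul using 1
    rw [hg_def, hE_def]
    ring
  have key : ∀ S : ℝ, x i t = (∫ s in (0:ℝ)..S, g s * E s) + x i (t - S) * E S := by
    intro S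
    have hint : IntervalIntegrable (fun s => -(g s * E s)) volume 0 S :=
      ((hgc.mul hEc).neg).intervalIntegrable 0 S
    have hftc := intervalIntegral.integral_eq_sub_of_hasDerivAt
      (f := fun s => x i (t - s) * E s) (f' := fun s => -(g s * E s))
      (fun s _ => hFder s) hint
    have hneg : ∫ s in (0:ℝ)..S, -(g s * E s) = -∫ s in (0:ℝ)..S, g s * E s :=
      intervalIntegral.integral_neg
    have hE0 : E 0 = 1 := by
      rw [hE_def]
      simp [hI_def, intervalIntegral.integral_same]
    rw [hneg] at hftc
    simp only [hE0, mul_one, sub_zero] at hftc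
    linarith
  -- exponential decay bound
  have hEle : ∀ s : ℝ, 0 ≤ s → E s ≤ Real.exp (-(μ₀ * s)) := by
    intro s hs
    rw [hE_def]
    apply Real.exp_le_exp.2
    apply neg_le_neg
    have h1 : ∫ u in (t - s)..t, μ₀ ≤ ∫ u in (t - s)..t, μ (x n u) :=
      intervalIntegral.integral_mono_on (by linarith)
        intervalIntegrable_const (hμc.intervalIntegrable _ _)
        (fun u _ => hμlb _)
    rw [intervalIntegral.integral_const] at h1
    calc μ₀ * s = (t - (t - s)) • μ₀ := by simp [smul_eq_mul]; ring
    _ ≤ I s := h1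
  have hEpos : ∀ s : ℝ, 0 < E s := fun s => Real.exp_pos _
  -- integrability on Ioi 0
  have hdom : IntegrableOn (fun s => Cf * Real.exp (-μ₀ * s)) (Set.Ioi (0:ℝ)) :=
    (exp_neg_integrableOn_Ioi 0 hμ₀).const_mul Cf
  have hIoi : IntegrableOn (fun s => g s * E s) (Set.Ioi (0:ℝ)) := by
    apply Integrable.mono hdom ((hgc.mul hEc).aestronglyMeasurable.restrict)
    filter_upwards [ae_restrict_mem measurableSet_Ioi] with s hs
    rw [Real.norm_eq_abs, Real.norm_eq_abs, Pi.mul_apply, abs_mul, abs_of_pos (hEpos s),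
      abs_mul, abs_of_nonneg hCf0, abs_of_pos (Real.exp_pos _)]
    have h1 : |g s| * E s ≤ Cf * E s :=
      mul_le_mul_of_nonneg_right (hCf _) (le_of_lt (hEpos s))
    have h2 : Cf * E s ≤ Cf * Real.exp (-μ₀ * s) := by
      apply mul_le_mul_of_nonneg_left _ hCf0
      have := hEle s (le_of_lt hs)
      rwa [neg_mul_eq_neg_mul] at this
    linarith
  -- limits
  have hT1 : Filter.Tendsto (fun S => ∫ s in (0:ℝ)..S, g s * E s) Filter.atTop
      (nhds (∫ s in Set.Ioi (0:ℝ), g s * E s)) :=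
    intervalIntegral_tendsto_integral_Ioi 0 hIoi Filter.tendsto_id
  have hT2 : Filter.Tendsto (fun S => x i (t - S) * E S) Filter.atTop (nhds 0) := by
    apply squeeze_zero_norm' (a := fun S => Cx * Real.exp (-(μ₀ * S)))
    · filter_upwards [Filter.eventually_ge_atTop (0:ℝ)] with S hS
      rw [Real.norm_eq_abs, abs_mul, abs_of_pos (hEpos S)]
      have hCx0 : 0 ≤ Cx := le_trans (abs_nonneg _) (hCx 0)
      calc |x i (t - S)| * E S ≤ Cx * E S :=
            mul_le_mul_of_nonneg_right (hCx _) (le_of_lt (hEpos S))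
        _ ≤ Cx * Real.exp (-(μ₀ * S)) :=
            mul_le_mul_of_nonneg_left (hEle S hS) hCx0
    · have hexp : Filter.Tendsto (fun S : ℝ => Real.exp (-(μ₀ * S))) Filter.atTop (nhds 0) :=
        Real.tendsto_exp_neg_atTop_nhds_zero.comp
          (Filter.Tendsto.const_mul_atTop hμ₀ Filter.tendsto_id)
      simpa using hexp.const_mul Cx
  have hTsum := hT1.add hT2
  rw [add_zero] at hTsum
  have hconst : Filter.Tendsto (fun _ : ℝ => x i t) Filter.atTop
      (nhds (∫ s in Set.Ioi (0:ℝ), g s * E s)) :=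
    hTsum.congr fun S => (key S).symm
  have hfinal : x i t = ∫ s in Set.Ioi (0:ℝ), g s * E s :=
    tendsto_nhds_unique tendsto_const_nhds hconst
  rw [hfinal, hg_def, hE_def, hI_def]
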